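/- Let W be the Wythoff swap sequence and F_k the Fibonacci numbers. Then for all k ≥ 1: W(F_{2k} − 1) = F_{2k−1} − 1 and W(F_{2k}) = F_{2k+1}. -/

import Mathlib

open Real

lemma absGoldConj_lt_one : |goldenConj| < 1 :=
  abs_lt.mpr ⟨neg_one_lt_goldenConj, goldenConj_neg.trans one_pos⟩

lemma absGoldConjPow_lt_one (n : ℕ) (hn : n ≠ 0) : |goldenConj ^ n| < 1 := by
  rw [abs_pow]
  exact pow_lt_one₀ (abs_nonneg _) absGoldConj_lt_one hn

lemma floor_fib_gold_odd (m : ℕ) :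
    ⌊(Nat.fib (2*m+1) : ℝ) * goldenRatio⌋₊ = Nat.fib (2*m+2) := by
  have h := fib_succ_sub_goldenRatio_mul_fib (2*m+1)
  have hneg : goldenConj ^ (2*m+1) < 0 :=
    Odd.pow_neg ⟨m, by ring⟩ goldenConj_neg
  have habs := absGoldConjPow_lt_one (2*m+1) (by omega)
  rw [abs_lt] at habs
  rw [Nat.floor_eq_iff (by positivity)]
  constructor
  · nlinarith
  · push_cast
    nlinarith

lemma floor_fib_gold_even (m : ℕ) :
    ⌊(Nat.fib (2*m+2) : ℝ) * goldenRatio⌋₊ = Nat.fib (2*m+3) - 1 := by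
  have h := fib_succ_sub_goldenRatio_mul_fib (2*m+2)
  have hpos : 0 < goldenConj ^ (2*m+2) :=
    Even.pow_pos ⟨m+1, by ring⟩ goldenConj_ne_zero
  have habs := absGoldConjPow_lt_one (2*m+2) (by omega)
  rw [abs_lt] at habs
  have hfib : 1 ≤ Nat.fib (2*m+3) := Nat.fib_pos.mpr (by omega)
  rw [Nat.floor_eq_iff (by positivity)]
  refine ⟨?_, ?_⟩ <;> rw [Nat.cast_sub hfib] <;> push_cast <;> nlinarith

/-- Values of the Wythoff swap sequence near even-indexed Fibonacci numbers:
for all `k ≥ 1`, `W(F_{2k} − 1) = F_{2k−1} − 1` and `W(F_{2k}) = F_{2k+1}`. -/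
theorem wythoff_swap_at_even_fibonacci
    (φ : ℝ) (hφ : φ = (1 + Real.sqrt 5) / 2)
    (L U : ℕ → ℕ)
    (hL : ∀ n : ℕ, L n = ⌊(n : ℝ) * φ⌋₊)
    (hU : ∀ n : ℕ, U n = ⌊(n : ℝ) * φ ^ 2⌋₊)
    (W : ℕ → ℕ) (hW0 : W 0 = 0)
    (hWL : ∀ k : ℕ, 1 ≤ k → W (L k) = U k)
    (hWU : ∀ k : ℕ, 1 ≤ k → W (U k) = L k) :
    ∀ k : ℕ, 1 ≤ k →
      W (Nat.fib (2 * k) - 1) = Nat.fib (2 * k - 1) - 1 ∧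
      W (Nat.fib (2 * k)) = Nat.fib (2 * k + 1) := by
  have hgold : φ = goldenRatio := hφ
  -- U in terms of L-like floors
  have hUeq : ∀ n : ℕ, U n = ⌊(n : ℝ) * φ⌋₊ + n := by
    intro n
    rw [hU]
    have hx : (n : ℝ) * φ ^ 2 = (n : ℝ) * φ + (n : ℕ) := by
      rw [hgold, goldenRatio_sq]; push_cast; ring
    rw [hx, Nat.floor_add_natCast (by rw [hgold]; positivity)]
  intro k hk
  obtain ⟨j, rfl⟩ : ∃ j, k = j + 1 := ⟨k - 1, by omega⟩
  have hidx2 : 2 * (j + 1) = 2 * j + 2 := by ring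
  have hidx1 : 2 * (j + 1) - 1 = 2 * j + 1 := by omega
  have hidx3 : 2 * (j + 1) + 1 = 2 * j + 3 := by ring
  have hfibrec : ∀ n, Nat.fib (n + 2) = Nat.fib n + Nat.fib (n + 1) := fun n => Nat.fib_add_two
  constructor
  · -- W (F_{2k} - 1) = F_{2k-1} - 1
    rw [hidx2]
    have hidx1' : 2 * j + 2 - 1 = 2 * j + 1 := by omega
    rw [hidx1']
    rcases Nat.eq_zero_or_pos j with rfl | hj
    · -- k = 1 case
      norm_num [hW0]
    · obtain ⟨i, rfl⟩ : ∃ i, j = i + 1 := ⟨j - 1, by omega⟩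
      have hfpos : 1 ≤ Nat.fib (2 * i + 2) := Nat.fib_pos.mpr (by omega)
      have hLf : L (Nat.fib (2 * i + 2)) = Nat.fib (2 * i + 3) - 1 := by
        rw [hL, hgold, floor_fib_gold_even]
      have hUf : U (Nat.fib (2 * i + 2)) = Nat.fib (2 * i + 4) - 1 := by
        rw [hUeq, hgold, floor_fib_gold_even]
        have h1 := hfibrec (2 * i + 2)
        simp only [show 2*i+2+2 = 2*i+4 from by omega, show 2*i+2+1 = 2*i+3 from by omega] at h1
        have h2 : 1 ≤ Nat.fib (2 * i + 3) := Nat.fib_pos.mpr (by omega)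
        omega
      have : W (Nat.fib (2 * i + 4) - 1) = Nat.fib (2 * i + 3) - 1 := by
        rw [← hUf, hWU _ hfpos, hLf]
      have hi4 : 2 * (i + 1) + 2 = 2 * i + 4 := by ring
      have hi3 : 2 * (i + 1) + 1 = 2 * i + 3 := by ring
      rw [hi4, hi3]
      exact this
  · -- W (F_{2k}) = F_{2k+1}
    rw [hidx2]
    have hidx3' : 2 * j + 2 + 1 = 2 * j + 3 := by omega
    rw [hidx3']
    have hfpos : 1 ≤ Nat.fib (2 * j + 1) := Nat.fib_pos.mpr (by omega)
    have hLf : L (Nat.fib (2 * j + 1)) = Nat.fib (2 * j + 2) := by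
      rw [hL, hgold, floor_fib_gold_odd]
    have hUf : U (Nat.fib (2 * j + 1)) = Nat.fib (2 * j + 3) := by
      rw [hUeq, hgold, floor_fib_gold_odd]
      have h1 := hfibrec (2 * j + 1)
      simp only [show 2*j+1+2 = 2*j+3 from by omega, show 2*j+1+1 = 2*j+2 from by omega] at h1
      omega
    rw [← hLf, hWL _ hfpos, hUf]
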